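/- For a convex function f : K → ℝ on a convex set K ⊆ ℝⁿ, define Z(a) = ∫_K e^{-a·f(x)} dx for a > 0. Then Z(a)·Z(b) ≤ Z((a+b)/2)² · ((a+b)²/(4ab))ⁿ for all a, b > 0. -/

import Mathlib

open MeasureTheory Real Set
open scoped Pointwise ENNReal

lemma bm_compact {A B : Set ℝ} (hA : A.Nonempty) (hB : B.Nonempty)
    (hAc : IsCompact A) (hBc : IsCompact B) :
    volume A + volume B ≤ volume (A + B) := by
  set a := sSup A with ha_def
  set b := sInf B with hb_def
  have haA : a ∈ A := hAc.sSup_mem hA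
  have hbB : b ∈ B := hBc.sInf_mem hB
  set S : Set ℝ := (· + b) '' A with hS
  set T : Set ℝ := (a + ·) '' B with hT
  have hSsub : S ⊆ A + B := by
    rintro _ ⟨x, hx, rfl⟩; exact Set.add_mem_add hx hbB
  have hTsub : T ⊆ A + B := by
    rintro _ ⟨y, hy, rfl⟩; exact Set.add_mem_add haA hy
  have hST : S ∩ T ⊆ {a + b} := by
    rintro z ⟨⟨x, hx, rfl⟩, ⟨y, hy, hz⟩⟩
    have h1 : x ≤ a := le_csSup hAc.bddAbove hx
    have h2 : b ≤ y := csInf_le hBc.bddBelow hy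
    have : x + b ≤ a + b := by linarith
    have : a + b ≤ x + b := by simp only [] at hz; rw [← hz]; linarith
    simp only [mem_singleton_iff]; linarith
  have hSm : volume S = volume A := by
    rw [hS, Set.image_add_right]
    exact measure_preimage_add_right volume (-b) A
  have hTm : volume T = volume B := by
    rw [hT, Set.image_add_left]
    exact measure_preimage_add volume (-a) B
  have hTmeas : MeasurableSet T := (hBc.image (continuous_add_left a)).measurableSet
  have hint : volume (S ∩ T) = 0 :=
    le_antisymm ((measure_mono hST).trans (le_of_eq (measure_singleton _))) zero_le
  calc volume A + volume B = volume S + volume T := by rw [hSm, hTm]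
    _ = volume (S ∪ T) + volume (S ∩ T) := (measure_union_add_inter S hTmeas).symm
    _ = volume (S ∪ T) := by rw [hint, add_zero]
    _ ≤ volume (A + B) := measure_mono (union_subset hSsub hTsub)

lemma bm_meas {A B : Set ℝ} (hA : A.Nonempty) (hB : B.Nonempty)
    (hAm : MeasurableSet A) (hBm : MeasurableSet B) :
    volume A + volume B ≤ volume (A + B) := by
  obtain ⟨a₀, ha₀⟩ := hA
  obtain ⟨b₀, hb₀⟩ := hB
  -- infinite cases
  rcases eq_or_ne (volume A) ∞ with hAinf | hAfin
  · have h1 : A + {b₀} ⊆ A + B := add_subset_add_left (by simpa using hb₀)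
    have h2 : volume (A + {b₀}) = volume A := by
      rw [Set.add_singleton, Set.image_add_right]
      exact measure_preimage_add_right volume (-b₀) A
    have : volume (A + {b₀}) ≤ volume (A + B) := measure_mono h1
    rw [h2, hAinf] at this
    simp [hAinf, top_le_iff.1 this]
  rcases eq_or_ne (volume B) ∞ with hBinf | hBfin
  · have h1 : {a₀} + B ⊆ A + B := add_subset_add_right (by simpa using ha₀)
    have h2 : volume ({a₀} + B) = volume B := by
      rw [Set.singleton_add, Set.image_add_left]
      exact measure_preimage_add volume (-a₀) B
    have : volume ({a₀} + B) ≤ volume (A + B) := measure_mono h1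
    rw [h2, hBinf] at this
    simp [hBinf, top_le_iff.1 this]
  -- approximate from inside by compacts
  refine ENNReal.le_of_forall_pos_le_add fun ε hε hfin => ?_
  have hε2 : (0:ℝ≥0∞) < ε / 2 := ENNReal.div_pos (by exact_mod_cast ne_of_gt hε) (by norm_num)
  obtain ⟨KA, hKA_sub, hKA_c, hKA_m⟩ := hAm.exists_isCompact_lt_add hAfin (ne_of_gt hε2)
  obtain ⟨KB, hKB_sub, hKB_c, hKB_m⟩ := hBm.exists_isCompact_lt_add hBfin (ne_of_gt hε2)
  have key := bm_compact (A := KA ∪ {a₀}) (B := KB ∪ {b₀}) (by simp)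
    (by simp) (hKA_c.union isCompact_singleton) (hKB_c.union isCompact_singleton)
  have hsub : (KA ∪ {a₀}) + (KB ∪ {b₀}) ⊆ A + B :=
    add_subset_add (union_subset hKA_sub (by simpa using ha₀))
      (union_subset hKB_sub (by simpa using hb₀))
  have h3 : volume KA ≤ volume (KA ∪ {a₀}) := measure_mono subset_union_left
  have h4 : volume KB ≤ volume (KB ∪ {b₀}) := measure_mono subset_union_left
  calc volume A + volume B
      ≤ (volume KA + ε/2) + (volume KB + ε/2) := add_le_add hKA_m.le hKB_m.le
    _ = volume KA + volume KB + (ε/2 + ε/2) := by ring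
    _ = volume KA + volume KB + ε := by rw [ENNReal.add_halves]
    _ ≤ volume (A + B) + ε := by
        gcongr
        exact le_trans (add_le_add h3 h4) (key.trans (measure_mono hsub))

lemma bm_half {A B C : Set ℝ} (hA : A.Nonempty) (hB : B.Nonempty)
    (hAm : MeasurableSet A) (hBm : MeasurableSet B)
    (hmid : ∀ x ∈ A, ∀ y ∈ B, (x + y) / 2 ∈ C) :
    volume A + volume B ≤ 2 * volume C := by
  have hsub : A + B ⊆ (2:ℝ) • C := by
    rintro _ ⟨x, hx, y, hy, rfl⟩
    exact ⟨(x + y) / 2, hmid x hx y hy, by simp only [smul_eq_mul]; ring⟩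
  calc volume A + volume B ≤ volume (A + B) := bm_meas hA hB hAm hBm
    _ ≤ volume ((2:ℝ) • C) := measure_mono hsub
    _ = 2 * volume C := by
        rw [Measure.addHaar_smul]
        norm_num

lemma ennreal_amgm (x y : ℝ≥0∞) : 4 * (x * y) ≤ (x + y) ^ 2 := by
  rcases eq_or_ne x ⊤ with rfl | hx
  · rcases eq_or_ne y 0 with rfl | hy
    · simp
    · have : (⊤ + y) ^ 2 = ⊤ := by
        rw [top_add]; simp [pow_two]
      rw [this]; exact le_top
  rcases eq_or_ne y ⊤ with rfl | hy
  · rcases eq_or_ne x 0 with rfl | hx0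
    · simp
    · have : (x + (⊤:ℝ≥0∞)) ^ 2 = ⊤ := by
        rw [add_top]; simp [pow_two]
      rw [this]; exact le_top
  · rw [← ENNReal.ofReal_toReal hx, ← ENNReal.ofReal_toReal hy]
    rw [← ENNReal.ofReal_mul (by positivity), ← ENNReal.ofReal_add (by positivity) (by positivity)]
    rw [show (4 : ℝ≥0∞) = ENNReal.ofReal (4:ℝ) by norm_num,
      ← ENNReal.ofReal_mul (by norm_num), ← ENNReal.ofReal_pow (by positivity)]
    apply ENNReal.ofReal_le_ofReal
    nlinarith [sq_nonneg (x.toReal - y.toReal), ENNReal.toReal_nonneg (a := x), ENNReal.toReal_nonneg (a := y)]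

/-- If `f` has infinite sup and `g` has nonzero integral, `h` has infinite integral. -/
lemma pl_aux_top {f g h : ℝ → ℝ≥0∞} (hg : Measurable g) (hh : Measurable h)
    (H : ∀ x y, f x * g y ≤ (h ((x + y) / 2)) ^ 2)
    (hsup : ⨆ x, f x = ⊤) (hg0 : ∫⁻ x, g x ≠ 0) : ∫⁻ x, h x = ⊤ := by
  -- find a level s₀ with positive measure superlevel set for g
  obtain ⟨s₀, hs₀0, hs₀top, hα⟩ :
      ∃ s₀ : ℝ≥0∞, s₀ ≠ 0 ∧ s₀ ≠ ⊤ ∧ 0 < volume {y | s₀ < g y} := by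
    by_contra hcon
    push_neg at hcon
    apply hg0
    rw [lintegral_eq_zero_iff hg]
    have : {y | g y ≠ 0} ⊆ ⋃ k : ℕ, {y | ((k:ℝ≥0∞) + 1)⁻¹ < g y} := by
      intro y hy
      obtain ⟨k, hk⟩ := ENNReal.exists_inv_nat_lt (hy : g y ≠ 0)
      refine mem_iUnion.2 ⟨k, ?_⟩
      exact lt_of_le_of_lt (by
        gcongr
        · exact le_add_of_nonneg_right zero_le_one) hk
    have hz : volume {y | g y ≠ 0} = 0 := by
      refine measure_mono_null this (measure_iUnion_null fun k => ?_)
      have hk0 : ((k:ℝ≥0∞) + 1)⁻¹ ≠ 0 := by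
        simp [ENNReal.inv_ne_zero]
      have hktop : ((k:ℝ≥0∞) + 1)⁻¹ ≠ ⊤ := by
        simp [ENNReal.inv_ne_top]
      have := hcon _ hk0 hktop
      exact le_antisymm this zero_le
    rw [Filter.EventuallyEq, ae_iff]
    simpa using hz
  set α := volume {y | s₀ < g y} with hαdef
  have sq_le : ∀ (T u : ℝ≥0∞), T ^ 2 ≤ u ^ 2 → T ≤ u := by
    intro T u hTu
    by_contra hc
    have : u ^ 2 < T ^ 2 := ENNReal.pow_lt_pow_left (by norm_num) (not_le.1 hc)
    exact absurd hTu (not_le.2 this)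
  have hBne : {y | s₀ < g y}.Nonempty := nonempty_of_measure_ne_zero (ne_of_gt hα)
  have hBm : MeasurableSet {y | s₀ < g y} := measurableSet_lt measurable_const hg
  have claim : ∀ T : ℝ≥0∞, T ≠ ⊤ → T * (α / 2) ≤ ∫⁻ x, h x := by
    intro T hT
    have hfin : T ^ 2 * s₀⁻¹ < ⊤ :=
      ENNReal.mul_lt_top (by simp [ENNReal.pow_lt_top, hT.lt_top]) (ENNReal.inv_lt_top.2 (pos_iff_ne_zero.2 hs₀0))
    obtain ⟨x₀, hx₀⟩ : ∃ x₀, T ^ 2 * s₀⁻¹ < f x₀ := by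
      rw [← hsup] at hfin
      exact lt_iSup_iff.1 hfin
    have hmid : ∀ x ∈ ({x₀} : Set ℝ), ∀ y ∈ {y | s₀ < g y}, (x + y) / 2 ∈ {z | T ≤ h z} := by
      intro x hx y hy
      rcases mem_singleton_iff.1 hx with rfl
      refine sq_le _ _ ?_
      calc T ^ 2 = T ^ 2 * s₀⁻¹ * s₀ := by
            rw [mul_assoc, ENNReal.inv_mul_cancel hs₀0 hs₀top, mul_one]
        _ ≤ f x * g y := mul_le_mul' hx₀.le (le_of_lt hy)
        _ ≤ h ((x + y) / 2) ^ 2 := H x y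
    have hbm := bm_half (singleton_nonempty x₀) hBne (measurableSet_singleton x₀) hBm hmid
    rw [measure_singleton, zero_add] at hbm
    have hC : α / 2 ≤ volume {z | T ≤ h z} := by
      rw [ENNReal.div_le_iff_le_mul (Or.inl (by norm_num)) (Or.inl (by norm_num))]
      rwa [mul_comm] at hbm
    calc T * (α / 2) ≤ T * volume {z | T ≤ h z} := by gcongr
      _ ≤ ∫⁻ x, h x := mul_meas_ge_le_lintegral₀ hh.aemeasurable T
  by_contra hI
  rcases eq_or_ne α ⊤ with hαtop | hαfin
  · have := claim 1 ENNReal.one_ne_top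
    rw [hαtop, one_mul] at this
    simp only [ENNReal.top_div_of_ne_top (by norm_num : (2:ℝ≥0∞) ≠ ⊤)] at this
    exact hI (top_le_iff.1 this)
  · set I := ∫⁻ x, h x with hIdef
    have hα2 : α / 2 ≠ 0 := by
      simp only [ne_eq, ENNReal.div_eq_zero_iff]
      push_neg
      exact ⟨ne_of_gt hα, by norm_num⟩
    have hα2top : α / 2 ≠ ⊤ := by
      simp [ENNReal.div_eq_top, hαfin]
    have hTfin : (I + 1) * (α / 2)⁻¹ ≠ ⊤ :=
      ENNReal.mul_ne_top (by simp [hI]) (ENNReal.inv_ne_top.2 hα2)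
    have := claim ((I + 1) * (α / 2)⁻¹) hTfin
    rw [mul_assoc, ENNReal.inv_mul_cancel hα2 hα2top, mul_one] at this
    exact absurd this (not_le.2 (ENNReal.lt_add_right hI one_ne_zero))

/-- change of variables for dilation -/
lemma cov_dilate (k : ℝ) (hk : 0 < k) (φ : ℝ → ℝ≥0∞) (hφ : Measurable φ) :
    ∫⁻ t in Ioo 0 k, φ t = ENNReal.ofReal k * ∫⁻ u in Ioo 0 1, φ (k * u) := by
  have hmap : Measure.map (fun u : ℝ => k * u) volume
      = ENNReal.ofReal |k⁻¹| • volume := Real.map_volume_mul_left (ne_of_gt hk)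
  have key : ∫⁻ u in Ioo 0 1, φ (k * u) = ENNReal.ofReal k⁻¹ * ∫⁻ t in Ioo 0 k, φ t := by
    have h1 : ∀ u : ℝ, (Ioo (0:ℝ) 1).indicator (fun u => φ (k * u)) u
        = (Ioo (0:ℝ) k).indicator φ (k * u) := by
      intro u
      by_cases hu : u ∈ Ioo (0:ℝ) 1
      · rw [indicator_of_mem hu, indicator_of_mem]
        exact ⟨by nlinarith [hu.1], by nlinarith [hu.2]⟩
      · rw [indicator_of_notMem hu, indicator_of_notMem]
        intro hku
        exact hu ⟨by nlinarith [hku.1], by nlinarith [hku.2]⟩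
    rw [← lintegral_indicator measurableSet_Ioo, ← lintegral_indicator measurableSet_Ioo]
    simp_rw [h1]
    rw [← lintegral_map (hφ.indicator measurableSet_Ioo) (measurable_const_mul k), hmap,
      lintegral_smul_measure, abs_of_pos (inv_pos.2 hk), smul_eq_mul]
  rw [key, ← mul_assoc, ← ENNReal.ofReal_mul hk.le, mul_inv_cancel₀ (ne_of_gt hk)]
  simp

theorem pl_one_dim {f g h : ℝ → ℝ≥0∞} (hf : Measurable f) (hg : Measurable g)
    (hh : Measurable h) (H : ∀ x y, f x * g y ≤ (h ((x + y) / 2)) ^ 2) :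
    (∫⁻ x, f x) * (∫⁻ x, g x) ≤ (∫⁻ x, h x) ^ 2 := by
  by_cases hf0 : ∫⁻ x, f x = 0
  · rw [hf0, zero_mul]; exact zero_le
  by_cases hg0 : ∫⁻ x, g x = 0
  · rw [hg0, mul_zero]; exact zero_le
  by_cases hhtop : ∫⁻ x, h x = ⊤
  · rw [hhtop]; simp [pow_two]
  -- sups are finite
  have H' : ∀ x y, g x * f y ≤ (h ((x + y) / 2)) ^ 2 := by
    intro x y; rw [mul_comm, add_comm]; exact H y x
  have hSf_top : ⨆ x, f x ≠ ⊤ := fun hc => hhtop (pl_aux_top hg hh H hc hg0)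
  have hSg_top : ⨆ x, g x ≠ ⊤ := fun hc => hhtop (pl_aux_top hf hh H' hc hf0)
  set Sf := ⨆ x, f x with hSf_def
  set Sg := ⨆ x, g x with hSg_def
  have hSf0 : Sf ≠ 0 := by
    intro hc
    apply hf0
    rw [lintegral_eq_zero_iff hf]
    refine Filter.Eventually.of_forall fun x => le_antisymm ?_ zero_le
    calc f x ≤ Sf := le_iSup f x
      _ = 0 := hc
  have hSg0 : Sg ≠ 0 := by
    intro hc
    apply hg0
    rw [lintegral_eq_zero_iff hg]
    refine Filter.Eventually.of_forall fun x => le_antisymm ?_ zero_le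
    calc g x ≤ Sg := le_iSup g x
      _ = 0 := hc
  -- normalization constants
  have hrSf : 0 < Sf.toReal := ENNReal.toReal_pos hSf0 hSf_top
  have hrSg : 0 < Sg.toReal := ENNReal.toReal_pos hSg0 hSg_top
  set rSf := Sf.toReal with hrSf_def
  set rSg := Sg.toReal with hrSg_def
  set rc := Real.sqrt (rSf * rSg) with hrc_def
  have hrc : 0 < rc := Real.sqrt_pos.2 (by positivity)
  have hrc2 : rc ^ 2 = rSf * rSg := Real.sq_sqrt (by positivity)
  set c := ENNReal.ofReal rc with hc_def
  have hc0 : c ≠ 0 := by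
    simp only [hc_def, ne_eq, ENNReal.ofReal_eq_zero, not_le]
    exact hrc
  have hctop : c ≠ ⊤ := ENNReal.ofReal_ne_top
  have hc2 : c ^ 2 = Sf * Sg := by
    have hofSf : ENNReal.ofReal rSf = Sf := ENNReal.ofReal_toReal hSf_top
    have hofSg : ENNReal.ofReal rSg = Sg := ENNReal.ofReal_toReal hSg_top
    rw [hc_def, ← ENNReal.ofReal_pow hrc.le, hrc2, ENNReal.ofReal_mul hrSf.le, hofSf, hofSg]
  -- truncated h
  set h' := fun x => min (h x) c with hh'_def
  have hh'm : Measurable h' := hh.min measurable_const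
  have hh'top : ∀ x, h' x ≠ ⊤ := fun x =>
    ne_top_of_le_ne_top hctop (min_le_right _ _)
  have hftop : ∀ x, f x ≠ ⊤ := fun x => ne_top_of_le_ne_top hSf_top (le_iSup f x)
  have hgtop : ∀ x, g x ≠ ⊤ := fun x => ne_top_of_le_ne_top hSg_top (le_iSup g x)
  have Hcond : ∀ x y, f x * g y ≤ (h' ((x + y) / 2)) ^ 2 := by
    intro x y
    rcases le_total (h ((x + y) / 2)) c with hle | hle
    · simp only [hh'_def, min_eq_left hle]
      exact H x y
    · simp only [hh'_def, min_eq_right hle]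
      calc f x * g y ≤ Sf * Sg := mul_le_mul' (le_iSup f x) (le_iSup g y)
        _ = c ^ 2 := hc2.symm
  -- real versions
  set F := fun x => (f x).toReal with hF_def
  set G := fun x => (g x).toReal with hG_def
  set Hr := fun x => (h' x).toReal with hHr_def
  have hFm : Measurable F := hf.ennreal_toReal
  have hGm : Measurable G := hg.ennreal_toReal
  have hHrm : Measurable Hr := hh'm.ennreal_toReal
  have hFbd : ∀ x, F x ≤ rSf := fun x =>
    ENNReal.toReal_mono hSf_top (le_iSup f x)
  have hGbd : ∀ x, G x ≤ rSg := fun x =>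
    ENNReal.toReal_mono hSg_top (le_iSup g x)
  -- layer cake for f
  have layer : ∀ (φ : ℝ → ℝ≥0∞), Measurable φ → (∀ x, φ x ≠ ⊤) →
      ∫⁻ x, φ x = ∫⁻ t in Ioi (0:ℝ), volume {x | t < (φ x).toReal} := by
    intro φ hφ hφtop
    have : ∀ x, φ x = ENNReal.ofReal ((φ x).toReal) := fun x =>
      (ENNReal.ofReal_toReal (hφtop x)).symm
    calc ∫⁻ x, φ x = ∫⁻ x, ENNReal.ofReal ((φ x).toReal) := by
          exact lintegral_congr fun x => this x
      _ = ∫⁻ t in Ioi (0:ℝ), volume {x | t < (φ x).toReal} :=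
          lintegral_eq_lintegral_meas_lt volume
            (Filter.Eventually.of_forall fun x => ENNReal.toReal_nonneg)
            hφ.ennreal_toReal.aemeasurable
  -- cut the layer integral at an upper bound for the function
  have cut : ∀ (k : ℝ), 0 < k → ∀ (R : ℝ → ℝ), (∀ x, R x ≤ k) →
      ∫⁻ t in Ioi (0:ℝ), volume {x | t < R x} = ∫⁻ t in Ioo (0:ℝ) k, volume {x | t < R x} := by
    intro k hk R hR
    have hsplit : Ioi (0:ℝ) = Ioo 0 k ∪ Ici k := by
      ext t
      simp only [mem_Ioi, mem_union, mem_Ioo, mem_Ici]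
      constructor
      · intro ht
        rcases lt_or_ge t k with h1 | h1
        · exact Or.inl ⟨ht, h1⟩
        · exact Or.inr h1
      · rintro (⟨h1, _⟩ | h1)
        · exact h1
        · linarith
    rw [hsplit, lintegral_union measurableSet_Ici (by
      rw [Set.disjoint_left]
      rintro t ⟨_, h2⟩ h3
      exact absurd h3 (not_le.2 h2))]
    have hzero : ∫⁻ t in Ici k, volume {x | t < R x} = 0 := by
      rw [← lintegral_zero (μ := volume.restrict (Ici k))]
      refine setLIntegral_congr_fun_ae measurableSet_Ici ?_
      refine Filter.Eventually.of_forall fun t ht => ?_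
      have : {x | t < R x} = ∅ := by
        ext x
        simp only [mem_setOf_eq, mem_empty_iff_false, iff_false, not_lt]
        exact (hR x).trans ht
      rw [this, measure_empty]
    rw [hzero, add_zero]
  -- the three layer quantities
  set X := ∫⁻ u in Ioo (0:ℝ) 1, volume {x | rSf * u < F x} with hX_def
  set Y := ∫⁻ u in Ioo (0:ℝ) 1, volume {x | rSg * u < G x} with hY_def
  set W := ∫⁻ u in Ioo (0:ℝ) 1, volume {x | rc * u < Hr x} with hW_def
  have hmono : ∀ (R : ℝ → ℝ), Measurable (fun t : ℝ => volume {x | t < R x}) := by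
    intro R
    have : Antitone (fun t : ℝ => volume {x | t < R x}) := by
      intro s t hst
      exact measure_mono fun x hx => lt_of_le_of_lt hst hx
    exact this.measurable
  have hf_eq : ∫⁻ x, f x = Sf * X := by
    rw [layer f hf hftop, cut rSf hrSf F hFbd, cov_dilate rSf hrSf _ (hmono F), hrSf_def,
      ENNReal.ofReal_toReal hSf_top]
  have hg_eq : ∫⁻ x, g x = Sg * Y := by
    rw [layer g hg hgtop, cut rSg hrSg G hGbd, cov_dilate rSg hrSg _ (hmono G), hrSg_def,
      ENNReal.ofReal_toReal hSg_top]
  have hh_ge : c * W ≤ ∫⁻ x, h x := by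
    have h1 : ∫⁻ x, h' x ≤ ∫⁻ x, h x := lintegral_mono fun x => min_le_left _ _
    have h2 : ∫⁻ x, h' x = ∫⁻ t in Ioi (0:ℝ), volume {x | t < Hr x} := layer h' hh'm hh'top
    have h3 : ∫⁻ t in Ioo (0:ℝ) rc, volume {x | t < Hr x}
        ≤ ∫⁻ t in Ioi (0:ℝ), volume {x | t < Hr x} :=
      lintegral_mono_set fun t ht => ht.1
    have h4 : ∫⁻ t in Ioo (0:ℝ) rc, volume {x | t < Hr x} = c * W := by
      rw [cov_dilate rc hrc _ (hmono Hr), hc_def]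
    calc c * W = ∫⁻ t in Ioo (0:ℝ) rc, volume {x | t < Hr x} := h4.symm
      _ ≤ ∫⁻ t in Ioi (0:ℝ), volume {x | t < Hr x} := h3
      _ = ∫⁻ x, h' x := h2.symm
      _ ≤ ∫⁻ x, h x := h1
  -- the key pointwise-in-u inequality
  have key : ∀ u ∈ Ioo (0:ℝ) 1,
      volume {x | rSf * u < F x} + volume {x | rSg * u < G x}
        ≤ 2 * volume {x | rc * u < Hr x} := by
    intro u hu
    have hu0 : 0 < u := hu.1
    have hu1 : u < 1 := hu.2
    have hAne : {x | rSf * u < F x}.Nonempty := by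
      have h1 : ENNReal.ofReal (rSf * u) < Sf := by
        rw [← ENNReal.ofReal_toReal hSf_top, ← hrSf_def]
        exact ENNReal.ofReal_lt_ofReal_iff hrSf |>.2 (by nlinarith)
      obtain ⟨x, hx⟩ := lt_iSup_iff.1 (hSf_def ▸ h1)
      exact ⟨x, (ENNReal.ofReal_lt_iff_lt_toReal (by positivity) (hftop x)).1 hx⟩
    have hBne : {x | rSg * u < G x}.Nonempty := by
      have h1 : ENNReal.ofReal (rSg * u) < Sg := by
        rw [← ENNReal.ofReal_toReal hSg_top, ← hrSg_def]
        exact ENNReal.ofReal_lt_ofReal_iff hrSg |>.2 (by nlinarith)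
      obtain ⟨x, hx⟩ := lt_iSup_iff.1 (hSg_def ▸ h1)
      exact ⟨x, (ENNReal.ofReal_lt_iff_lt_toReal (by positivity) (hgtop x)).1 hx⟩
    have hAm : MeasurableSet {x | rSf * u < F x} := measurableSet_lt measurable_const hFm
    have hBm : MeasurableSet {x | rSg * u < G x} := measurableSet_lt measurable_const hGm
    refine bm_half hAne hBne hAm hBm ?_
    intro x hx y hy
    simp only [mem_setOf_eq] at hx hy ⊢
    have h1 : (rc * u) ^ 2 < F x * G y := by
      have := mul_lt_mul'' hx hy (by positivity) (by positivity)
      calc (rc * u) ^ 2 = (rSf * u) * (rSg * u) := by rw [mul_pow, hrc2]; ring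
        _ < F x * G y := this
    have h2 : F x * G y ≤ Hr ((x + y) / 2) ^ 2 := by
      have := Hcond x y
      have htr := ENNReal.toReal_mono (by
        exact ENNReal.pow_ne_top (hh'top _)) this
      rwa [ENNReal.toReal_mul, ENNReal.toReal_pow] at htr
    exact lt_of_pow_lt_pow_left₀ 2 ENNReal.toReal_nonneg (lt_of_lt_of_le h1 h2)
  -- integrate the key inequality
  have hXY : X + Y ≤ 2 * W := by
    have hmf : Measurable fun u : ℝ => volume {x | rSf * u < F x} :=
      (hmono F).comp (measurable_const_mul rSf)
    have hmh : Measurable fun u : ℝ => volume {x | rc * u < Hr x} :=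
      (hmono Hr).comp (measurable_const_mul rc)
    calc X + Y = ∫⁻ u in Ioo (0:ℝ) 1,
          (volume {x | rSf * u < F x} + volume {x | rSg * u < G x}) :=
          (lintegral_add_left hmf _).symm
      _ ≤ ∫⁻ u in Ioo (0:ℝ) 1, 2 * volume {x | rc * u < Hr x} :=
          setLIntegral_mono (hmh.const_mul 2) key
      _ = 2 * W := lintegral_const_mul 2 hmh
  -- conclude
  have hXYW : X * Y ≤ W ^ 2 := by
    have h1 : 4 * (X * Y) ≤ (X + Y) ^ 2 := ennreal_amgm X Y
    have h2 : (X + Y) ^ 2 ≤ (2 * W) ^ 2 := by gcongr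
    have h3 : (2 * W) ^ 2 = 4 * W ^ 2 := by ring
    have h4 : 4 * (X * Y) ≤ 4 * W ^ 2 := by
      calc 4 * (X * Y) ≤ (X + Y) ^ 2 := h1
        _ ≤ (2 * W) ^ 2 := h2
        _ = 4 * W ^ 2 := h3
    exact (ENNReal.mul_le_mul_iff_right (by norm_num) (by norm_num)).1 h4
  calc (∫⁻ x, f x) * ∫⁻ x, g x = Sf * Sg * (X * Y) := by
        rw [hf_eq, hg_eq]; ring
    _ ≤ Sf * Sg * W ^ 2 := by gcongr
    _ = (c * W) ^ 2 := by rw [mul_pow, hc2]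
    _ ≤ (∫⁻ x, h x) ^ 2 := by gcongr

theorem pl_dim (n : ℕ) (f g h : (Fin n → ℝ) → ℝ≥0∞) (hf : Measurable f)
    (hg : Measurable g) (hh : Measurable h)
    (H : ∀ x y, f x * g y ≤ (h ((2:ℝ)⁻¹ • (x + y))) ^ 2) :
    (∫⁻ x, f x) * (∫⁻ x, g x) ≤ (∫⁻ x, h x) ^ 2 := by
  induction n with
  | zero =>
      have hvol : (volume : Measure (Fin 0 → ℝ)) Set.univ = 1 := by
        rw [show (volume : Measure (Fin 0 → ℝ)) = Measure.pi fun _ => volume from rfl,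
          Measure.pi_univ]
        simp
      have hint : ∀ (φ : (Fin 0 → ℝ) → ℝ≥0∞), ∫⁻ x, φ x = φ default := by
        intro φ
        rw [lintegral_unique, hvol, mul_one]
        exact congrArg φ (Subsingleton.elim _ _)
      rw [hint f, hint g, hint h]
      have h2 := H default default
      have h3 : (2:ℝ)⁻¹ • ((default : Fin 0 → ℝ) + default) = default :=
        Subsingleton.elim _ _
      rwa [h3] at h2
  | succ n ih =>
      set e := MeasurableEquiv.piFinSuccAbove (fun _ : Fin (n+1) => ℝ) 0 with he_def
      have hmp : MeasurePreserving e volume volume :=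
        volume_preserving_piFinSuccAbove (fun _ : Fin (n+1) => ℝ) 0
      set f' : ℝ × (Fin n → ℝ) → ℝ≥0∞ := fun p => f (e.symm p) with hf'_def
      set g' : ℝ × (Fin n → ℝ) → ℝ≥0∞ := fun p => g (e.symm p) with hg'_def
      set h' : ℝ × (Fin n → ℝ) → ℝ≥0∞ := fun p => h (e.symm p) with hh'_def
      have hf'm : Measurable f' := hf.comp e.symm.measurable
      have hg'm : Measurable g' := hg.comp e.symm.measurable
      have hh'm : Measurable h' := hh.comp e.symm.measurable
      have hsymm_add : ∀ (p q : ℝ × (Fin n → ℝ)),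
          e.symm (p + q) = e.symm p + e.symm q := by
        intro p q
        funext i
        refine Fin.cases ?_ (fun j => ?_) i <;>
          simp [he_def, MeasurableEquiv.piFinSuccAbove, Fin.insertNthEquiv]
      have hsymm_smul : ∀ (r : ℝ) (p : ℝ × (Fin n → ℝ)),
          e.symm (r • p) = r • e.symm p := by
        intro r p
        funext i
        refine Fin.cases ?_ (fun j => ?_) i <;>
          simp [he_def, MeasurableEquiv.piFinSuccAbove, Fin.insertNthEquiv]
      have hlin : ∀ (σ τ : ℝ) (z w : Fin n → ℝ),
          e.symm ((σ + τ) / 2, (2:ℝ)⁻¹ • (z + w))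
            = (2:ℝ)⁻¹ • (e.symm (σ, z) + e.symm (τ, w)) := by
        intro σ τ z w
        rw [← hsymm_add, ← hsymm_smul]
        congr 1
        refine Prod.ext ?_ rfl
        show (σ + τ) / 2 = (2:ℝ)⁻¹ • ((σ, z) + (τ, w)).1
        simp only [Prod.fst_add, smul_eq_mul]
        ring
      set F : (Fin n → ℝ) → ℝ≥0∞ := fun z => ∫⁻ τ, f' (τ, z) with hF_def
      set G : (Fin n → ℝ) → ℝ≥0∞ := fun z => ∫⁻ τ, g' (τ, z) with hG_def
      set Hm : (Fin n → ℝ) → ℝ≥0∞ := fun z => ∫⁻ τ, h' (τ, z) with hHm_def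
      have hFm : Measurable F :=
        Measurable.lintegral_prod_left (f := fun τ z => f' (τ, z)) (by exact hf'm)
      have hGm : Measurable G :=
        Measurable.lintegral_prod_left (f := fun τ z => g' (τ, z)) (by exact hg'm)
      have hHmm : Measurable Hm :=
        Measurable.lintegral_prod_left (f := fun τ z => h' (τ, z)) (by exact hh'm)
      have hcond : ∀ z w, F z * G w ≤ (Hm ((2:ℝ)⁻¹ • (z + w))) ^ 2 := by
        intro z w
        refine pl_one_dim (f := fun τ => f' (τ, z)) (g := fun τ => g' (τ, w))
          (h := fun τ => h' (τ, (2:ℝ)⁻¹ • (z + w)))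
          (hf'm.comp (measurable_id.prodMk measurable_const))
          (hg'm.comp (measurable_id.prodMk measurable_const))
          (hh'm.comp (measurable_id.prodMk measurable_const)) ?_
        intro σ τ
        have hH := H (e.symm (σ, z)) (e.symm (τ, w))
        rw [← hlin σ τ z w] at hH
        exact hH
      have hIH := ih F G Hm hFm hGm hHmm hcond
      have hint : ∀ (φ : (Fin (n+1) → ℝ) → ℝ≥0∞), Measurable φ →
          ∫⁻ x, φ x = ∫⁻ z, ∫⁻ τ, φ (e.symm (τ, z)) := by
        intro φ hφ
        have h1 : ∫⁻ x, φ x = ∫⁻ p, (φ ∘ ⇑e.symm) p ∂((volume : Measure ℝ).prod (volume : Measure (Fin n → ℝ))) := by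
          rw [show ((volume : Measure ℝ).prod (volume : Measure (Fin n → ℝ))) = (volume : Measure (ℝ × (Fin n → ℝ))) from rfl]
          rw [← hmp.lintegral_comp (hφ.comp e.symm.measurable)]
          refine lintegral_congr fun x => ?_
          simp
        rw [h1, lintegral_prod_symm _ ((hφ.comp e.symm.measurable).aemeasurable)]
        rfl
      rw [hint f hf, hint g hg, hint h hh]
      exact hIH

theorem pl_euclid (n : ℕ) (f g h : EuclideanSpace ℝ (Fin n) → ℝ≥0∞)
    (hf : Measurable f) (hg : Measurable g) (hh : Measurable h)
    (H : ∀ x y, f x * g y ≤ (h ((2:ℝ)⁻¹ • (x + y))) ^ 2) :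
    (∫⁻ x, f x) * (∫⁻ x, g x) ≤ (∫⁻ x, h x) ^ 2 := by
  set e := (MeasurableEquiv.toLp 2 (Fin n → ℝ)).symm with he_def
  have hmp : MeasurePreserving (⇑e.symm) volume volume :=
    (EuclideanSpace.volume_preserving_symm_measurableEquiv_toLp (Fin n)).symm
  have hadd : ∀ p q : Fin n → ℝ, e.symm (p + q) = e.symm p + e.symm q := by
    intro p q
    simp [he_def, MeasurableEquiv.coe_toLp]
  have hsmul : ∀ (r : ℝ) (p : Fin n → ℝ), e.symm (r • p) = r • e.symm p := by
    intro r p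
    simp [he_def, MeasurableEquiv.coe_toLp]
  have hint : ∀ (φ : EuclideanSpace ℝ (Fin n) → ℝ≥0∞), Measurable φ →
      ∫⁻ x, φ x = ∫⁻ p, φ (e.symm p) := by
    intro φ hφ
    exact (hmp.lintegral_comp hφ).symm
  rw [hint f hf, hint g hg, hint h hh]
  refine pl_dim n _ _ _ (hf.comp e.symm.measurable) (hg.comp e.symm.measurable)
    (hh.comp e.symm.measurable) ?_
  intro p q
  have h2 := H (e.symm p) (e.symm q)
  rw [hsmul, hadd]
  exact h2

lemma meas_ind {α : Type*} [MeasurableSpace α] [TopologicalSpace α] [OpensMeasurableSpace α]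
    {U : Set α} (hU : IsOpen U) {ρ : α → ℝ} (hρ : ContinuousOn ρ U) :
    Measurable (U.indicator ρ) := by
  refine measurable_of_isOpen fun s hs => ?_
  have hiU : IsOpen (U ∩ ρ ⁻¹' s) := hρ.isOpen_inter_preimage hU hs
  by_cases h0 : (0:ℝ) ∈ s
  · have : U.indicator ρ ⁻¹' s = (U ∩ ρ ⁻¹' s) ∪ Uᶜ := by
      ext x
      by_cases hx : x ∈ U <;> simp [indicator, hx, h0]
    rw [this]
    exact hiU.measurableSet.union hU.measurableSet.compl
  · have : U.indicator ρ ⁻¹' s = U ∩ ρ ⁻¹' s := by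
      ext x
      by_cases hx : x ∈ U <;> simp [indicator, hx, h0]
    rw [this]
    exact hiU.measurableSet

/-- For a convex function `f` on a convex body `K ⊆ ℝⁿ` and `Z(a) = ∫_K e^{-a f}`,
one has `Z(a)·Z(b) ≤ Z((a+b)/2)² · ((a+b)²/(4ab))ⁿ`. -/
theorem stmt_2 (n : ℕ) (K : Set (EuclideanSpace ℝ (Fin n)))
    (hKconv : Convex ℝ K) (hKcomp : IsCompact K) (hKint : (interior K).Nonempty)
    (f : EuclideanSpace ℝ (Fin n) → ℝ) (hf : ConvexOn ℝ K f)
    (Z : ℝ → ℝ) (hZ : ∀ a : ℝ, Z a = ∫ x in K, Real.exp (-a * f x))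
    (a b : ℝ) (ha : 0 < a) (hb : 0 < b) :
    Z a * Z b ≤ Z ((a + b) / 2) ^ 2 * ((a + b) ^ 2 / (4 * a * b)) ^ n := by
  set c : ℝ := (a + b) / 2 with hc_def
  have hc : 0 < c := by positivity
  set U := interior K with hU_def
  have hUopen : IsOpen U := isOpen_interior
  have hfc : ContinuousOn f U := hf.continuousOn_interior
  -- the scaled log-concave densities
  set ρ : ℝ → EuclideanSpace ℝ (Fin n) → ℝ := fun s y => Real.exp (-s * f (s⁻¹ • y)) with hρ_def
  set φ : ℝ → EuclideanSpace ℝ (Fin n) → ℝ≥0∞ := fun s y =>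
    ENNReal.ofReal ((interior (s • K)).indicator (ρ s) y) with hφ_def
  -- continuity and measurability
  have hsU : ∀ s : ℝ, 0 < s → interior (s • K) = s • U := fun s hs =>
    interior_smul₀ (ne_of_gt hs) K
  have hρc : ∀ s : ℝ, 0 < s → ContinuousOn (ρ s) (interior (s • K)) := by
    intro s hs
    rw [hsU s hs]
    refine Real.continuous_exp.comp_continuousOn ?_
    refine (continuousOn_const.mul (hfc.comp ?_ ?_))
    · exact (continuous_const_smul (s⁻¹ : ℝ)).continuousOn
    · intro y hy
      obtain ⟨u, hu, rfl⟩ := hy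
      rwa [inv_smul_smul₀ (ne_of_gt hs)]
  have hφm : ∀ s : ℝ, 0 < s → Measurable (φ s) := by
    intro s hs
    exact ENNReal.measurable_ofReal.comp
      (meas_ind ((hsU s hs) ▸ (hUopen.smul₀ (ne_of_gt hs))) (hρc s hs))
  -- the Prekopa-Leindler hypothesis
  have Hcond : ∀ x y, φ a x * φ b y ≤ (φ c ((2:ℝ)⁻¹ • (x + y))) ^ 2 := by
    intro x y
    by_cases hx : x ∈ interior (a • K)
    case neg =>
      simp only [hφ_def, indicator_of_notMem hx, ENNReal.ofReal_zero, zero_mul]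
      exact zero_le
    by_cases hy : y ∈ interior (b • K)
    case neg =>
      simp only [hφ_def, indicator_of_notMem hy, ENNReal.ofReal_zero, mul_zero]
      exact zero_le
    rw [hsU a ha] at hx
    rw [hsU b hb] at hy
    obtain ⟨u, hu, rfl⟩ := hx
    obtain ⟨v, hv, rfl⟩ := hy
    have hab : a + b ≠ 0 := by positivity
    set w : EuclideanSpace ℝ (Fin n) := (a / (a + b)) • u + (b / (a + b)) • v with hw_def
    have hwU : w ∈ U := by
      refine hKconv.interior hu hv (by positivity) (by positivity) ?_
      field_simp
    have hmid : (2:ℝ)⁻¹ • (a • u + b • v) = c • w := by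
      rw [hw_def, smul_add, smul_add, smul_smul, smul_smul, smul_smul, smul_smul]
      congr 1
      · congr 1; field_simp; ring
      · congr 1; field_simp; ring
    have hmem : c • w ∈ interior (c • K) := by
      rw [hsU c hc]
      exact smul_mem_smul_set hwU
    have hval : ∀ (s : ℝ), 0 < s → ∀ z ∈ U, φ s (s • z) = ENNReal.ofReal (Real.exp (-s * f z)) := by
      intro s hs z hz
      simp only [hφ_def]
      rw [indicator_of_mem (by rw [hsU s hs]; exact smul_mem_smul_set hz)]
      simp only [hρ_def]
      rw [inv_smul_smul₀ (ne_of_gt hs)]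
    rw [hmid, hval a ha u hu, hval b hb v hv, hval c hc w hwU]
    rw [← ENNReal.ofReal_mul (by positivity), ← ENNReal.ofReal_pow (by positivity)]
    apply ENNReal.ofReal_le_ofReal
    have hconv : f w ≤ (a / (a + b)) * f u + (b / (a + b)) * f v := by
      have h4 := hf.2 (interior_subset hu) (interior_subset hv)
        (by positivity : (0:ℝ) ≤ a / (a+b)) (by positivity : (0:ℝ) ≤ b / (a+b))
        (by field_simp)
      simpa [hw_def, smul_eq_mul] using h4
    have h2 : (a + b) * f w ≤ a * f u + b * f v := by
      have h3 := mul_le_mul_of_nonneg_left hconv (by positivity : (0:ℝ) ≤ a + b)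
      calc (a+b) * f w ≤ (a+b) * ((a/(a+b)) * f u + (b/(a+b)) * f v) := h3
        _ = a * f u + b * f v := by field_simp
    rw [← Real.exp_add, sq, ← Real.exp_add]
    apply Real.exp_le_exp.2
    rw [hc_def]
    nlinarith [h2]
  -- integral identities
  set ψ : ℝ → EuclideanSpace ℝ (Fin n) → ℝ≥0∞ :=
    fun s x => ENNReal.ofReal (Real.exp (-s * f x)) with hψ_def
  set L : ℝ → ℝ≥0∞ := fun s => ∫⁻ x in U, ψ s x with hL_def
  have hUm : MeasurableSet U := hUopen.measurableSet
  have hcont : ∀ s : ℝ, ContinuousOn (fun x => Real.exp (-s * f x)) U := by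
    intro s
    exact Real.continuous_exp.comp_continuousOn (continuousOn_const.mul hfc)
  have hφint : ∀ s : ℝ, 0 < s → ∫⁻ y, φ s y = ENNReal.ofReal (s ^ n) * L s := by
    intro s hs
    set Φr : EuclideanSpace ℝ (Fin n) → ℝ :=
      U.indicator (fun x => Real.exp (-s * f x)) with hΦr_def
    have hΦrm : Measurable Φr := meas_ind hUopen (hcont s)
    have hpt : ∀ y, φ s y = ENNReal.ofReal (Φr (s⁻¹ • y)) := by
      intro y
      by_cases hy : y ∈ interior (s • K)
      · have hyU : s⁻¹ • y ∈ U := by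
          rw [hsU s hs] at hy
          obtain ⟨u, hu, rfl⟩ := hy
          rwa [inv_smul_smul₀ (ne_of_gt hs)]
        simp only [hφ_def, hΦr_def, indicator_of_mem hy, indicator_of_mem hyU, hρ_def]
      · have hyU : s⁻¹ • y ∉ U := by
          intro hcontra
          apply hy
          rw [hsU s hs]
          exact ⟨s⁻¹ • y, hcontra, smul_inv_smul₀ (ne_of_gt hs) y⟩
        simp only [hφ_def, hΦr_def, indicator_of_notMem hy, indicator_of_notMem hyU,
          ENNReal.ofReal_zero]
    have hmap : Measure.map ((s⁻¹ : ℝ) • ·) (volume : Measure (EuclideanSpace ℝ (Fin n)))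
        = ENNReal.ofReal (s ^ n) • volume := by
      rw [Measure.map_addHaar_smul volume (inv_ne_zero (ne_of_gt hs))]
      have habs : |((s⁻¹ : ℝ) ^ Module.finrank ℝ (EuclideanSpace ℝ (Fin n)))⁻¹| = s ^ n := by
        rw [finrank_euclideanSpace_fin, ← inv_pow, inv_inv]
        exact abs_of_pos (by positivity)
      rw [habs]
    have hg : Measurable fun z => ENNReal.ofReal (Φr z) :=
      ENNReal.measurable_ofReal.comp hΦrm
    calc ∫⁻ y, φ s y = ∫⁻ y, ENNReal.ofReal (Φr (s⁻¹ • y)) := lintegral_congr hpt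
      _ = ∫⁻ z, ENNReal.ofReal (Φr z) ∂(Measure.map ((s⁻¹ : ℝ) • ·) volume) :=
          (lintegral_map hg (measurable_const_smul _)).symm
      _ = ENNReal.ofReal (s ^ n) * ∫⁻ z, ENNReal.ofReal (Φr z) := by
          rw [hmap, lintegral_smul_measure, smul_eq_mul]
      _ = ENNReal.ofReal (s ^ n) * L s := by
          have heq : (fun z => ENNReal.ofReal (Φr z)) = U.indicator (fun z => ψ s z) := by
            funext z
            by_cases hz : z ∈ U <;> simp [hΦr_def, hψ_def, hz]
          rw [heq, lintegral_indicator hUm]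
  -- PL inequality on the L quantities
  have hPL : (ENNReal.ofReal (a ^ n) * L a) * (ENNReal.ofReal (b ^ n) * L b)
      ≤ (ENNReal.ofReal (c ^ n) * L c) ^ 2 := by
    rw [← hφint a ha, ← hφint b hb, ← hφint c hc]
    exact pl_euclid n (φ a) (φ b) (φ c) (hφm a ha) (hφm b hb) (hφm c hc) Hcond
  -- identify Z with L
  have hKU : (K : Set (EuclideanSpace ℝ (Fin n))) =ᵐ[volume] U := by
    rw [ae_eq_set]
    constructor
    · refine measure_mono_null ?_ (hKconv.addHaar_frontier volume)
      rw [hKcomp.isClosed.frontier_eq]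
    · have : U \ K = ∅ := by
        rw [diff_eq_empty]
        exact interior_subset
      rw [this, measure_empty]
  have hZL : ∀ s : ℝ, Z s = (L s).toReal := by
    intro s
    rw [hZ s]
    have h1 : ∫ x in K, Real.exp (-s * f x) = ∫ x in U, Real.exp (-s * f x) := by
      rw [Measure.restrict_congr_set hKU]
    rw [h1]
    rw [integral_eq_lintegral_of_nonneg_ae
      (Filter.Eventually.of_forall fun x => (Real.exp_pos _).le)
      ((hcont s).aestronglyMeasurable hUm)]
  -- conclude
  by_cases hLc : L c = ⊤
  · have hdom : L c ≤ L a + L b := by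
      rw [hL_def]
      have hpt : ∀ x, ψ c x ≤ ψ a x + ψ b x := by
        intro x
        rcases le_total (a * f x) (b * f x) with hcase | hcase
        · have : Real.exp (-c * f x) ≤ Real.exp (-a * f x) := by
            apply Real.exp_le_exp.2
            rw [hc_def]; nlinarith
          calc ψ c x ≤ ψ a x := ENNReal.ofReal_le_ofReal this
            _ ≤ ψ a x + ψ b x := le_self_add
        · have : Real.exp (-c * f x) ≤ Real.exp (-b * f x) := by
            apply Real.exp_le_exp.2
            rw [hc_def]; nlinarith
          calc ψ c x ≤ ψ b x := ENNReal.ofReal_le_ofReal this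
            _ ≤ ψ a x + ψ b x := le_add_self
      calc ∫⁻ x in U, ψ c x ≤ ∫⁻ x in U, (ψ a x + ψ b x) :=
            lintegral_mono fun x => hpt x
        _ = (∫⁻ x in U, ψ a x) + ∫⁻ x in U, ψ b x :=
            lintegral_add_left'
              (ENNReal.measurable_ofReal.comp_aemeasurable ((hcont a).aemeasurable hUm)) _
    have hab_top : L a = ⊤ ∨ L b = ⊤ := by
      by_contra hno
      push_neg at hno
      rw [hLc] at hdom
      exact absurd (top_le_iff.1 hdom) (ENNReal.add_ne_top.2 ⟨hno.1, hno.2⟩)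
    have hzero : Z a * Z b = 0 := by
      rcases hab_top with htop | htop
      · rw [hZL a, htop]; simp
      · rw [hZL b, htop]; simp
    rw [hzero]
    have h1 : 0 ≤ Z ((a+b)/2) ^ 2 := sq_nonneg _
    have h2 : (0:ℝ) ≤ ((a + b) ^ 2 / (4 * a * b)) ^ n := by positivity
    positivity
  · have hRfin : (ENNReal.ofReal (c ^ n) * L c) ^ 2 ≠ ⊤ := by
      apply ENNReal.pow_ne_top
      exact ENNReal.mul_ne_top ENNReal.ofReal_ne_top hLc
    have htr := ENNReal.toReal_mono hRfin hPL
    rw [ENNReal.toReal_mul, ENNReal.toReal_mul, ENNReal.toReal_mul, ENNReal.toReal_pow,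
      ENNReal.toReal_mul, ENNReal.toReal_ofReal (by positivity : (0:ℝ) ≤ a ^ n),
      ENNReal.toReal_ofReal (by positivity : (0:ℝ) ≤ b ^ n),
      ENNReal.toReal_ofReal (by positivity : (0:ℝ) ≤ c ^ n)] at htr
    rw [← hZL a, ← hZL b, ← hZL c] at htr
    have hZc : Z ((a + b) / 2) = Z c := by rw [hc_def]
    rw [hZc]
    rw [← mul_le_mul_iff_left₀ (show (0:ℝ) < a ^ n * b ^ n by positivity)]
    calc Z a * Z b * (a ^ n * b ^ n) = a ^ n * Z a * (b ^ n * Z b) := by ring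
      _ ≤ (c ^ n * Z c) ^ 2 := htr
      _ = Z c ^ 2 * ((a + b) ^ 2 / (4 * a * b)) ^ n * (a ^ n * b ^ n) := by
          have ha' : a ≠ 0 := ne_of_gt ha
          have hb' : b ≠ 0 := ne_of_gt hb
          have h5 : ((a + b) ^ 2 / (4 * a * b)) * (a * b) = c ^ 2 := by
            rw [hc_def, div_pow]
            field_simp
            ring
          calc (c ^ n * Z c) ^ 2 = (c ^ n) ^ 2 * Z c ^ 2 := mul_pow _ _ 2
            _ = (c ^ 2) ^ n * Z c ^ 2 := by rw [pow_right_comm]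
            _ = (((a + b) ^ 2 / (4 * a * b)) * (a * b)) ^ n * Z c ^ 2 := by rw [h5]
            _ = Z c ^ 2 * ((a + b) ^ 2 / (4 * a * b)) ^ n * (a ^ n * b ^ n) := by
                rw [mul_pow, ← mul_pow a b n]
                ring
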